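/- For (t,x) and (t̃,x̃) in ℕ × ∂B with t, t̃ ≥ 1 and (t̃,x̃) ∈ S(t,x), the transforms N_{t,x} and N_{t̃,x̃} agree on functions supported in B: for every h : ℤ^d → ℝ vanishing outside B and every (u,z) ∈ S(t̃,x̃), the (u,z)-component of N_{t,x} applied to (h(w + r e_d))_{(r,w)∈S(t,x)} equals the (u,z)-component of N_{t̃,x̃} applied to (h(w + r e_d))_{(r,w)∈S(t̃,x̃)}. -/

import Mathlib

open Finset

/-- The `i`-th standard unit vector `e_i` in `ℤ^(d+1)`. -/
def unitVec (d : ℕ) (i : Fin (d + 1)) : Fin (d + 1) → ℤ := Pi.single i 1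

/-- The ℓ¹-norm `‖v‖₁ = ∑ i, |v i|` on `ℤ^(d+1)`. -/
def norm1 {d : ℕ} (v : Fin (d + 1) → ℤ) : ℤ := ∑ i, |v i|

/-- `P t x z` represents the `t`-step transition probability `P(Z^x_t = z)` of a
time-homogeneous Markov chain on `ℤ^(d+1)` which at each step moves by `± e_i`,
with all `2(d+1)` one-step probabilities strictly positive and summing to `1`. -/
structure IsRandomWalk (d : ℕ)
    (P : ℕ → (Fin (d + 1) → ℤ) → (Fin (d + 1) → ℤ) → ℝ) : Prop where
  nonneg : ∀ t x z, 0 ≤ P t x z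
  init : ∀ x z, P 0 x z = if z = x then 1 else 0
  step : ∀ t x z, P (t + 1) x z =
      ∑ i, P 1 x (x + unitVec d i) * P t (x + unitVec d i) z
        + ∑ i, P 1 x (x - unitVec d i) * P t (x - unitVec d i) z
  sum_one : ∀ x, (∑ i, P 1 x (x + unitVec d i)) + (∑ i, P 1 x (x - unitVec d i)) = 1
  pos_add : ∀ x i, 0 < P 1 x (x + unitVec d i)
  pos_sub : ∀ x i, 0 < P 1 x (x - unitVec d i)

/-- The expectation `E[h(Z^x_t)]` (the law of `Z^x_t` has finite support). -/
noncomputable def expect {d : ℕ} (P : ℕ → (Fin (d + 1) → ℤ) → (Fin (d + 1) → ℤ) → ℝ)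
    (t : ℕ) (x : Fin (d + 1) → ℤ) (h : (Fin (d + 1) → ℤ) → ℝ) : ℝ :=
  ∑ᶠ z, h z * P t x z

/-- The finite set `S(t,x) = {(s,y) ∈ ℕ × ∂B : 1 ≤ s ≤ t, ‖y − x‖₁ ≤ t − s,
and t − s − ‖y − x‖₁ is even}`. -/
noncomputable def Sset (d t : ℕ) (x : Fin (d + 1) → ℤ) : Finset (ℕ × (Fin (d + 1) → ℤ)) :=
  ((Finset.Icc 1 t) ×ˢ (Fintype.piFinset fun i => Finset.Icc (x i - t) (x i + t))).filter
    (fun p => p.2 (Fin.last d) = 0 ∧ norm1 (p.2 - x) ≤ (t : ℤ) - p.1 ∧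
      Even ((t : ℤ) - p.1 - norm1 (p.2 - x)))

/-- The matrix `W^+_{t,x}`, with entries `(W^+)_{(s,y),(u,z)} = P(Z^y_s = z + u e_d)`. -/
noncomputable def Wplus {d : ℕ} (P : ℕ → (Fin (d + 1) → ℤ) → (Fin (d + 1) → ℤ) → ℝ)
    (t : ℕ) (x : Fin (d + 1) → ℤ) :
    Matrix {p // p ∈ Sset d t x} {p // p ∈ Sset d t x} ℝ :=
  fun p q => P p.1.1 p.1.2 (q.1.2 + Pi.single (Fin.last d) (q.1.1 : ℤ))

/-- The matrix `W^-_{t,x}`, with entries `(W^-)_{(s,y),(u,z)} = P(Z^y_s = z - u e_d)`. -/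
noncomputable def Wminus {d : ℕ} (P : ℕ → (Fin (d + 1) → ℤ) → (Fin (d + 1) → ℤ) → ℝ)
    (t : ℕ) (x : Fin (d + 1) → ℤ) :
    Matrix {p // p ∈ Sset d t x} {p // p ∈ Sset d t x} ℝ :=
  fun p q => P p.1.1 p.1.2 (q.1.2 - Pi.single (Fin.last d) (q.1.1 : ℤ))

/-- `N_{t,x} = (W^-_{t,x})⁻¹ W^+_{t,x}`. -/
noncomputable def Nmat {d : ℕ} (P : ℕ → (Fin (d + 1) → ℤ) → (Fin (d + 1) → ℤ) → ℝ)
    (t : ℕ) (x : Fin (d + 1) → ℤ) :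
    Matrix {p // p ∈ Sset d t x} {p // p ∈ Sset d t x} ℝ :=
  (Wminus P t x)⁻¹ * Wplus P t x

/-- The extended transform `N f`, vanishing outside `{w : w_d < 0}`, defined at a point
`w = x − t e_d` (with `x ∈ ∂B`, `t ≥ 1`) as the `(t,x)`-component of `N_{t,x}` applied to
the vector `(f(z + u e_d))_{(u,z) ∈ S(t,x)}`.  (Note that `(t,x) ∈ S(t,x)` always holds
in this situation, so the guard below is satisfied exactly when `w_d < 0`.) -/
noncomputable def Ntrans {d : ℕ} (P : ℕ → (Fin (d + 1) → ℤ) → (Fin (d + 1) → ℤ) → ℝ)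
    (f : (Fin (d + 1) → ℤ) → ℝ) : (Fin (d + 1) → ℤ) → ℝ := fun w =>
  if hm : ((-(w (Fin.last d))).toNat, Function.update w (Fin.last d) 0) ∈
      Sset d (-(w (Fin.last d))).toNat (Function.update w (Fin.last d) 0) then
    (Nmat P (-(w (Fin.last d))).toNat (Function.update w (Fin.last d) 0)).mulVec
      (fun p => f (p.1.2 + Pi.single (Fin.last d) (p.1.1 : ℤ)))
      ⟨((-(w (Fin.last d))).toNat, Function.update w (Fin.last d) 0), hm⟩
  else 0

lemma even_abs_sub (a : ℤ) : Even (|a| - a) := by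
  rcases abs_cases a with ⟨h, _⟩ | ⟨h, _⟩
  · simp [h]
  · rw [h]; exact ⟨-a, by ring⟩

lemma norm1_nonneg {d : ℕ} (v : Fin (d + 1) → ℤ) : 0 ≤ norm1 v :=
  Finset.sum_nonneg fun i _ => abs_nonneg _

lemma norm1_pos {d : ℕ} {v : Fin (d + 1) → ℤ} (h : v ≠ 0) : 0 < norm1 v := by
  obtain ⟨i, hi⟩ := Function.ne_iff.mp h
  exact Finset.sum_pos' (fun j _ => abs_nonneg _) ⟨i, Finset.mem_univ _, abs_pos.mpr hi⟩

lemma norm1_add_le {d : ℕ} (a b : Fin (d + 1) → ℤ) : norm1 (a + b) ≤ norm1 a + norm1 b := by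
  rw [norm1, norm1, norm1, ← Finset.sum_add_distrib]
  exact Finset.sum_le_sum fun i _ => abs_add_le _ _

lemma norm1_parity {d : ℕ} (v : Fin (d + 1) → ℤ) : Even (norm1 v - ∑ i, v i) := by
  rw [norm1, ← Finset.sum_sub_distrib]
  exact Finset.even_sum _ fun i _ => even_abs_sub _

lemma norm1_single {d : ℕ} {v : Fin (d + 1) → ℤ} (hv : v (Fin.last d) = 0) (c : ℤ) :
    norm1 (v + Pi.single (Fin.last d) c) = norm1 v + |c| := by
  have key : ∀ j : Fin (d + 1),
      |v j + (Pi.single (Fin.last d) c : Fin (d + 1) → ℤ) j|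
        = |v j| + if j = Fin.last d then |c| else 0 := by
    intro j
    rcases eq_or_ne j (Fin.last d) with hj | hj
    · subst hj; simp [hv]
    · simp [Pi.single_apply, hj]
  simp only [norm1, Pi.add_apply, key, Finset.sum_add_distrib,
    Finset.sum_ite_eq' Finset.univ (Fin.last d) fun _ => |c|, Finset.mem_univ, if_true]

lemma norm1_unit {d : ℕ} (i : Fin (d + 1)) : norm1 (unitVec d i) = 1 :=
  by simp [norm1, unitVec, Pi.single_apply, apply_ite abs]

lemma norm1_neg {d : ℕ} (v : Fin (d + 1) → ℤ) : norm1 (-v) = norm1 v := by simp [norm1]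

lemma parity_rel {d : ℕ} (a b : Fin (d + 1) → ℤ) :
    Even (norm1 (a + b) - norm1 a - norm1 b) := by
  have h1 := norm1_parity (a + b)
  have h2 := norm1_parity a
  have h3 := norm1_parity b
  have hs : ∑ i, (a + b) i = (∑ i, a i) + ∑ i, b i := by
    simp [Finset.sum_add_distrib]
  rw [Int.even_iff] at h1 h2 h3 ⊢
  rw [hs] at h1
  omega

lemma reach {d : ℕ} {P : ℕ → (Fin (d + 1) → ℤ) → (Fin (d + 1) → ℤ) → ℝ}
    (hP : IsRandomWalk d P) :
    ∀ (s : ℕ) (y w : Fin (d + 1) → ℤ), P s y w ≠ 0 →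
      norm1 (w - y) ≤ (s : ℤ) ∧ Even ((s : ℤ) - norm1 (w - y)) := by
  intro s
  induction s with
  | zero =>
      intro y w h
      rw [hP.init] at h
      rcases eq_or_ne w y with rfl | hne
      · simp [norm1]
      · simp [hne] at h
  | succ s ih =>
      intro y w h
      rw [hP.step] at h
      have hkey : ∃ u : Fin (d + 1) → ℤ, norm1 u = 1 ∧ P s (y + u) w ≠ 0 := by
        by_cases h1 : (∑ i, P 1 y (y + unitVec d i) * P s (y + unitVec d i) w) ≠ 0
        · obtain ⟨i, _, hi⟩ := Finset.exists_ne_zero_of_sum_ne_zero h1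
          exact ⟨unitVec d i, norm1_unit i, (mul_ne_zero_iff.mp hi).2⟩
        · have h2 : (∑ i, P 1 y (y - unitVec d i) * P s (y - unitVec d i) w) ≠ 0 := by
            push_neg at h1; intro h2; rw [h1, h2] at h; simp at h
          obtain ⟨i, _, hi⟩ := Finset.exists_ne_zero_of_sum_ne_zero h2
          refine ⟨-unitVec d i, by rw [norm1_neg]; exact norm1_unit i, ?_⟩
          rw [← sub_eq_add_neg]
          exact (mul_ne_zero_iff.mp hi).2
      obtain ⟨u, hu, hne⟩ := hkey
      obtain ⟨h1, h2⟩ := ih (y + u) w hne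
      have hwy : w - y = (w - (y + u)) + u := by ring
      have h3 := parity_rel (w - (y + u)) u
      have h4 := norm1_add_le (w - (y + u)) u
      rw [hu] at h3 h4
      rw [hwy]
      push_cast
      rw [Int.even_iff] at h2 h3 ⊢
      omega

lemma down_pos {d : ℕ} {P : ℕ → (Fin (d + 1) → ℤ) → (Fin (d + 1) → ℤ) → ℝ}
    (hP : IsRandomWalk d P) :
    ∀ (s : ℕ) (y : Fin (d + 1) → ℤ), 0 < P s y (y - Pi.single (Fin.last d) (s : ℤ)) := by
  intro s
  induction s with
  | zero => intro y; simp [hP.init]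
  | succ s ih =>
      intro y
      have htarget : y - Pi.single (Fin.last d) ((s + 1 : ℕ) : ℤ)
          = (y - unitVec d (Fin.last d)) - Pi.single (Fin.last d) (s : ℤ) := by
        have : (Pi.single (Fin.last d) ((s + 1 : ℕ) : ℤ) : Fin (d + 1) → ℤ)
            = Pi.single (Fin.last d) ((s : ℤ)) + Pi.single (Fin.last d) (1 : ℤ) := by
          rw [← Pi.single_add]; norm_num
        rw [this]
        unfold unitVec
        ring
      rw [hP.step, htarget]
      set w := (y - unitVec d (Fin.last d)) - Pi.single (Fin.last d) (s : ℤ) with hw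
      have hterm : 0 < P 1 y (y - unitVec d (Fin.last d)) * P s (y - unitVec d (Fin.last d)) w := by
        apply mul_pos (hP.pos_sub _ _)
        exact ih _
      have hle : P 1 y (y - unitVec d (Fin.last d)) * P s (y - unitVec d (Fin.last d)) w
          ≤ ∑ i, P 1 y (y - unitVec d i) * P s (y - unitVec d i) w :=
        Finset.single_le_sum (f := fun i => P 1 y (y - unitVec d i) * P s (y - unitVec d i) w)
          (fun i _ => mul_nonneg (hP.nonneg _ _ _) (hP.nonneg _ _ _)) (Finset.mem_univ _)
      have h0 : 0 ≤ ∑ i, P 1 y (y + unitVec d i) * P s (y + unitVec d i) w :=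
        Finset.sum_nonneg fun i _ => mul_nonneg (hP.nonneg _ _ _) (hP.nonneg _ _ _)
      linarith

lemma entry_norm {d : ℕ} {y z : Fin (d + 1) → ℤ} (hy : y (Fin.last d) = 0)
    (hz : z (Fin.last d) = 0) (c : ℤ) :
    norm1 (z + Pi.single (Fin.last d) c - y) = norm1 (z - y) + |c| := by
  have h : z + Pi.single (Fin.last d) c - y = (z - y) + Pi.single (Fin.last d) c := by ring
  rw [h, norm1_single (by simp [hz, hy]) c]

lemma entry_norm_sub {d : ℕ} {y z : Fin (d + 1) → ℤ} (hy : y (Fin.last d) = 0)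
    (hz : z (Fin.last d) = 0) (c : ℤ) :
    norm1 (z - Pi.single (Fin.last d) c - y) = norm1 (z - y) + |c| := by
  have h : z - Pi.single (Fin.last d) c - y = (z - y) + Pi.single (Fin.last d) (-c) := by
    funext j
    rcases eq_or_ne j (Fin.last d) with hj | hj
    · subst hj; simp; ring
    · simp [Pi.single_apply, hj]
  rw [h, norm1_single (by simp [hz, hy]) (-c), abs_neg]

lemma mem_Sset_iff {d t : ℕ} {x : Fin (d + 1) → ℤ} {p : ℕ × (Fin (d + 1) → ℤ)} :
    p ∈ Sset d t x ↔ 1 ≤ p.1 ∧ p.2 (Fin.last d) = 0 ∧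
      norm1 (p.2 - x) ≤ (t : ℤ) - p.1 ∧ Even ((t : ℤ) - p.1 - norm1 (p.2 - x)) := by
  unfold Sset
  rw [Finset.mem_filter, Finset.mem_product, Finset.mem_Icc, Fintype.mem_piFinset]
  constructor
  · rintro ⟨⟨⟨h1, _⟩, _⟩, h3, h4, h5⟩; exact ⟨h1, h3, h4, h5⟩
  · rintro ⟨h1, h3, h4, h5⟩
    have hn := norm1_nonneg (p.2 - x)
    have hpt : (p.1 : ℤ) ≤ t := by omega
    refine ⟨⟨⟨h1, by exact_mod_cast hpt⟩, fun i => ?_⟩, h3, h4, h5⟩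
    rw [Finset.mem_Icc]
    have hsingle : |p.2 i - x i| ≤ norm1 (p.2 - x) := by
      have := Finset.single_le_sum (f := fun j => |(p.2 - x) j|)
        (fun j _ => abs_nonneg _) (Finset.mem_univ i)
      simpa [norm1] using this
    have : |p.2 i - x i| ≤ (t : ℤ) := by omega
    rw [abs_le] at this
    omega

lemma Sset_closed {d t : ℕ} {x : Fin (d + 1) → ℤ} {s : ℕ} {y : Fin (d + 1) → ℤ}
    (hsy : (s, y) ∈ Sset d t x) {u : ℕ} {z : Fin (d + 1) → ℤ}
    (hu : 1 ≤ u) (hz : z (Fin.last d) = 0)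
    (h1 : norm1 (z - y) ≤ (s : ℤ) - u) (h2 : Even ((s : ℤ) - u - norm1 (z - y))) :
    (u, z) ∈ Sset d t x := by
  rw [mem_Sset_iff] at hsy ⊢
  dsimp only at hsy ⊢
  obtain ⟨hs1, hy, hs3, hs4⟩ := hsy
  have htri : norm1 (z - x) ≤ norm1 (z - y) + norm1 (y - x) := by
    have := norm1_add_le (z - y) (y - x)
    rw [sub_add_sub_cancel] at this
    exact this
  have hpar : Even (norm1 (z - y) + norm1 (y - x) - norm1 (z - x)) := by
    have := parity_rel (z - y) (y - x)
    rw [sub_add_sub_cancel] at this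
    rw [Int.even_iff] at this ⊢
    omega
  have h0 := norm1_nonneg (z - y)
  have h0' := norm1_nonneg (y - x)
  have h0'' := norm1_nonneg (z - x)
  rw [Int.even_iff] at h2 hs4 hpar
  refine ⟨hu, hz, ?_, ?_⟩
  · omega
  · rw [Int.even_iff]; omega

lemma entry_mem {d : ℕ} {P : ℕ → (Fin (d + 1) → ℤ) → (Fin (d + 1) → ℤ) → ℝ}
    (hP : IsRandomWalk d P) {t' : ℕ} {x' : Fin (d + 1) → ℤ}
    {s u : ℕ} {y z : Fin (d + 1) → ℤ} (hsy : (s, y) ∈ Sset d t' x')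
    (hu : 1 ≤ u) (hz : z (Fin.last d) = 0) {c : ℤ} (hc : |c| = u)
    (hne : P s y (z + Pi.single (Fin.last d) c) ≠ 0) :
    (u, z) ∈ Sset d t' x' := by
  have hy : y (Fin.last d) = 0 := (mem_Sset_iff.mp hsy).2.1
  obtain ⟨h1, h2⟩ := reach hP s y _ hne
  rw [entry_norm hy hz c, hc] at h1 h2
  refine Sset_closed hsy hu hz (by omega) ?_
  rw [Int.even_iff] at h2 ⊢
  omega

lemma det_Wminus_ne {d : ℕ} {P : ℕ → (Fin (d + 1) → ℤ) → (Fin (d + 1) → ℤ) → ℝ}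
    (hP : IsRandomWalk d P) (t : ℕ) (x : Fin (d + 1) → ℤ) :
    (Wminus P t x).det ≠ 0 := by
  classical
  have hbt : (Wminus P t x).BlockTriangular (fun p => -(p.1.1 : ℤ)) := by
    intro i j hij
    by_contra hne
    have hy : i.1.2 (Fin.last d) = 0 := (mem_Sset_iff.mp i.2).2.1
    have hz : j.1.2 (Fin.last d) = 0 := (mem_Sset_iff.mp j.2).2.1
    obtain ⟨h1, _⟩ := reach hP i.1.1 i.1.2 _ hne
    rw [entry_norm_sub hy hz _] at h1
    have hn := norm1_nonneg (j.1.2 - i.1.2)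
    rw [abs_of_nonneg (by positivity : (0:ℤ) ≤ (j.1.1 : ℤ))] at h1
    simp only [neg_lt_neg_iff] at hij
    omega
  rw [hbt.det]
  rw [Finset.prod_ne_zero_iff]
  intro a _
  have hdiag : (Wminus P t x).toSquareBlock (fun p => -(p.1.1 : ℤ)) a
      = Matrix.diagonal
          (fun p => P p.1.1.1 p.1.1.2 (p.1.1.2 - Pi.single (Fin.last d) (p.1.1.1 : ℤ))) := by
    ext i j
    rcases eq_or_ne i j with rfl | hij
    · simp [Matrix.toSquareBlock_def, Wminus, Matrix.diagonal_apply_eq]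
    · rw [Matrix.diagonal_apply_ne _ hij]
      have hsu : i.1.1.1 = j.1.1.1 := by
        have h1 := i.2
        have h2 := j.2
        omega
      have hij' : i.1 ≠ j.1 := fun h => hij (Subtype.ext h)
      have hyz : i.1.1.2 ≠ j.1.1.2 := by
        intro h
        apply hij'
        apply Subtype.ext
        exact Prod.ext hsu h
      simp only [Matrix.toSquareBlock_def, Wminus]
      by_contra hne
      have hy : i.1.1.2 (Fin.last d) = 0 := (mem_Sset_iff.mp i.1.2).2.1
      have hz : j.1.1.2 (Fin.last d) = 0 := (mem_Sset_iff.mp j.1.2).2.1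
      obtain ⟨h1, _⟩ := reach hP i.1.1.1 i.1.1.2 _ hne
      rw [entry_norm_sub hy hz _] at h1
      have hn : 0 < norm1 (j.1.1.2 - i.1.1.2) := norm1_pos (sub_ne_zero.mpr (Ne.symm hyz))
      rw [abs_of_nonneg (by positivity : (0:ℤ) ≤ (j.1.1.1 : ℤ))] at h1
      omega
  rw [hdiag, Matrix.det_diagonal]
  rw [Finset.prod_ne_zero_iff]
  intro p _
  exact (down_pos hP p.1.1.1 p.1.1.2).ne'

/-- if `(t̃,x̃) ∈ S(t,x)`, then `N_{t,x}` and `N_{t̃,x̃}` agree on vectors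
coming from a function `h` supported in `B`. -/
theorem stmt_9 (d : ℕ) (P : ℕ → (Fin (d + 1) → ℤ) → (Fin (d + 1) → ℤ) → ℝ)
    (hP : IsRandomWalk d P) (t t' : ℕ) (ht : 1 ≤ t) (ht' : 1 ≤ t')
    (x x' : Fin (d + 1) → ℤ) (hx : x (Fin.last d) = 0) (hx' : x' (Fin.last d) = 0)
    (hmem : (t', x') ∈ Sset d t x)
    (h : (Fin (d + 1) → ℤ) → ℝ) (hh : ∀ z, z (Fin.last d) ≤ 0 → h z = 0) :
    ∀ (q : ℕ × (Fin (d + 1) → ℤ)) (hq : q ∈ Sset d t' x') (hq' : q ∈ Sset d t x),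
      (Nmat P t x).mulVec
        (fun p => h (p.1.2 + Pi.single (Fin.last d) (p.1.1 : ℤ))) ⟨q, hq'⟩ =
      (Nmat P t' x').mulVec
        (fun p => h (p.1.2 + Pi.single (Fin.last d) (p.1.1 : ℤ))) ⟨q, hq⟩ := by
  classical
  intro q hq hq'
  have hsub : ∀ r ∈ Sset d t' x', r ∈ Sset d t x := by
    intro r hr
    obtain ⟨u, z⟩ := r
    rw [mem_Sset_iff] at hr
    dsimp only at hr
    obtain ⟨hr1, hr2, hr3, hr4⟩ := hr
    exact Sset_closed hmem hr1 hr2 hr3 hr4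
  have hA : IsUnit (Wminus P t x).det := isUnit_iff_ne_zero.mpr (det_Wminus_ne hP t x)
  have hA' : IsUnit (Wminus P t' x').det := isUnit_iff_ne_zero.mpr (det_Wminus_ne hP t' x')
  set hv : {p // p ∈ Sset d t x} → ℝ :=
    fun p => h (p.1.2 + Pi.single (Fin.last d) (p.1.1 : ℤ)) with hhv
  set hv' : {p // p ∈ Sset d t' x'} → ℝ :=
    fun p => h (p.1.2 + Pi.single (Fin.last d) (p.1.1 : ℤ)) with hhv'
  set g : {p // p ∈ Sset d t x} → ℝ := (Nmat P t x).mulVec hv with hg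
  have hAg : (Wminus P t x).mulVec g = (Wplus P t x).mulVec hv := by
    rw [hg]
    show (Wminus P t x).mulVec (((Wminus P t x)⁻¹ * Wplus P t x).mulVec hv) = _
    rw [Matrix.mulVec_mulVec, ← Matrix.mul_assoc, Matrix.mul_nonsing_inv _ hA, Matrix.one_mul]
  set G : ℕ × (Fin (d + 1) → ℤ) → ℝ :=
    fun r => if hr : r ∈ Sset d t x then g ⟨r, hr⟩ else 0 with hG
  have hGg : ∀ (r : {p // p ∈ Sset d t x}), G r.1 = g r := by
    rintro ⟨r, hr⟩
    rw [hG]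
    exact dif_pos hr
  set g' : {p // p ∈ Sset d t' x'} → ℝ := fun p => G p.1 with hg'
  have key : (Wminus P t' x').mulVec g' = (Wplus P t' x').mulVec hv' := by
    funext p
    obtain ⟨⟨s, y⟩, hp⟩ := p
    have hpt : (s, y) ∈ Sset d t x := hsub _ hp
    have e1 : (Wminus P t' x').mulVec g' ⟨(s, y), hp⟩
        = ∑ r ∈ Sset d t' x', P s y (r.2 - Pi.single (Fin.last d) (r.1 : ℤ)) * G r := by
      rw [show (Wminus P t' x').mulVec g' ⟨(s, y), hp⟩
          = ∑ r : {p // p ∈ Sset d t' x'},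
              P s y (r.1.2 - Pi.single (Fin.last d) (r.1.1 : ℤ)) * G r.1
        from Finset.sum_congr rfl fun j _ => rfl]
      exact Finset.sum_coe_sort (Sset d t' x')
        (fun r => P s y (r.2 - Pi.single (Fin.last d) (r.1 : ℤ)) * G r)
    have e2 : ∑ r ∈ Sset d t' x', P s y (r.2 - Pi.single (Fin.last d) (r.1 : ℤ)) * G r
        = ∑ r ∈ Sset d t x, P s y (r.2 - Pi.single (Fin.last d) (r.1 : ℤ)) * G r := by
      apply Finset.sum_subset hsub
      intro r hrS hrnot
      obtain ⟨u, z⟩ := r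
      have hzero : P s y (z - Pi.single (Fin.last d) (u : ℤ)) = 0 := by
        by_contra hne
        apply hrnot
        rw [mem_Sset_iff] at hrS
        dsimp only at hrS
        have hconv : z - Pi.single (Fin.last d) ((u : ℤ)) =
            z + Pi.single (Fin.last d) (-(u : ℤ)) := by
          funext j
          rcases eq_or_ne j (Fin.last d) with hj | hj
          · subst hj; simp [sub_eq_add_neg]
          · simp [Pi.single_apply, hj]
        exact entry_mem hP hp hrS.1 hrS.2.1 (c := -(u : ℤ)) (by simp) (hconv ▸ hne)
      dsimp only
      rw [hzero, zero_mul]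
    have e3 : ∑ r ∈ Sset d t x, P s y (r.2 - Pi.single (Fin.last d) (r.1 : ℤ)) * G r
        = (Wminus P t x).mulVec g ⟨(s, y), hpt⟩ := by
      symm
      rw [show (Wminus P t x).mulVec g ⟨(s, y), hpt⟩
          = ∑ r : {p // p ∈ Sset d t x},
              P s y (r.1.2 - Pi.single (Fin.last d) (r.1.1 : ℤ)) * G r.1
        from Finset.sum_congr rfl fun j _ => by rw [hGg j]; rfl]
      exact Finset.sum_coe_sort (Sset d t x)
        (fun r => P s y (r.2 - Pi.single (Fin.last d) (r.1 : ℤ)) * G r)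
    have e4 : (Wplus P t x).mulVec hv ⟨(s, y), hpt⟩
        = ∑ r ∈ Sset d t x, P s y (r.2 + Pi.single (Fin.last d) (r.1 : ℤ))
            * h (r.2 + Pi.single (Fin.last d) (r.1 : ℤ)) := by
      rw [show (Wplus P t x).mulVec hv ⟨(s, y), hpt⟩
          = ∑ r : {p // p ∈ Sset d t x},
              P s y (r.1.2 + Pi.single (Fin.last d) (r.1.1 : ℤ))
                * h (r.1.2 + Pi.single (Fin.last d) (r.1.1 : ℤ))
        from Finset.sum_congr rfl fun j _ => rfl]
      exact Finset.sum_coe_sort (Sset d t x)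
        (fun r => P s y (r.2 + Pi.single (Fin.last d) (r.1 : ℤ))
          * h (r.2 + Pi.single (Fin.last d) (r.1 : ℤ)))
    have e5 : ∑ r ∈ Sset d t x, P s y (r.2 + Pi.single (Fin.last d) (r.1 : ℤ))
            * h (r.2 + Pi.single (Fin.last d) (r.1 : ℤ))
        = ∑ r ∈ Sset d t' x', P s y (r.2 + Pi.single (Fin.last d) (r.1 : ℤ))
            * h (r.2 + Pi.single (Fin.last d) (r.1 : ℤ)) := by
      symm
      apply Finset.sum_subset hsub
      intro r hrS hrnot
      obtain ⟨u, z⟩ := r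
      have hzero : P s y (z + Pi.single (Fin.last d) (u : ℤ)) = 0 := by
        by_contra hne
        apply hrnot
        rw [mem_Sset_iff] at hrS
        dsimp only at hrS
        exact entry_mem hP hp hrS.1 hrS.2.1 (c := (u : ℤ)) (by simp) hne
      dsimp only
      rw [hzero, zero_mul]
    have e6 : ∑ r ∈ Sset d t' x', P s y (r.2 + Pi.single (Fin.last d) (r.1 : ℤ))
            * h (r.2 + Pi.single (Fin.last d) (r.1 : ℤ))
        = (Wplus P t' x').mulVec hv' ⟨(s, y), hp⟩ := by
      symm
      rw [show (Wplus P t' x').mulVec hv' ⟨(s, y), hp⟩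
          = ∑ r : {p // p ∈ Sset d t' x'},
              P s y (r.1.2 + Pi.single (Fin.last d) (r.1.1 : ℤ))
                * h (r.1.2 + Pi.single (Fin.last d) (r.1.1 : ℤ))
        from Finset.sum_congr rfl fun j _ => rfl]
      exact Finset.sum_coe_sort (Sset d t' x')
        (fun r => P s y (r.2 + Pi.single (Fin.last d) (r.1 : ℤ))
          * h (r.2 + Pi.single (Fin.last d) (r.1 : ℤ)))
    rw [e1, e2, e3, congrFun hAg ⟨(s, y), hpt⟩, e4, e5, e6]
  have hgfin : g' = (Nmat P t' x').mulVec hv' := by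
    have h2 := congrArg (fun v => (Wminus P t' x')⁻¹.mulVec v) key
    simp only [Matrix.mulVec_mulVec] at h2
    rw [Matrix.nonsing_inv_mul _ hA', Matrix.one_mulVec] at h2
    exact h2
  show g ⟨q, hq'⟩ = (Nmat P t' x').mulVec hv' ⟨q, hq⟩
  rw [← hgfin]
  show g ⟨q, hq'⟩ = G q
  exact (hGg ⟨q, hq'⟩).symm
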